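/- Let k ≥ 4 be even. Define W_k^{+,0} as the space of polynomials P(X) = Σ_{i=2, i even}^{k−4} a_i X^i with rational coefficients such that P|_{k−2}(1−T)(1+M) = 0, where T = [[1,1],[0,1]], M = [[−1,−1],[2,1]], and the slash action is f|γ(X) = (cX+d)^{k−2} f((aX+b)/(cX+d)) extended linearly to the group ring. Then dim_Q W_k^{+,0} = ⌊k/4⌋ − 1. -/

import Mathlib

open Polynomial

/-- Weight-`w` slash action of the matrix [[a,b],[c,d]] on a polynomial of degree ≤ w:
`(f | γ)(x) = (cx+d)^w f((ax+b)/(cx+d))`, written polynomially as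
`Σ_i coeff_i (aX+b)^i (cX+d)^{w−i}`. -/
noncomputable def slash (w : ℕ) (a b c d : ℚ) (f : Polynomial ℚ) : Polynomial ℚ :=
  ∑ i ∈ Finset.range (w + 1),
    C (f.coeff i) * (C a * X + C b) ^ i * (C c * X + C d) ^ (w - i)

/-- `P|(1−T)(1+M) = P + P|M − P|T − P|TM` with T=[[1,1],[0,1]], M=[[−1,−1],[2,1]],
TM=[[1,0],[2,1]]. -/
noncomputable def periodRel (w : ℕ) (P : Polynomial ℚ) : Polynomial ℚ :=
  P + slash w (-1) (-1) 2 1 P - slash w 1 1 0 1 P - slash w 1 0 2 1 P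

namespace DimAux

lemma slash_monomial (w : ℕ) (a b c d : ℚ) (e : ℕ) (he : e ≤ w) (g : ℚ) :
    slash w a b c d (monomial e g) = C g * (C a * X + C b) ^ e * (C c * X + C d) ^ (w - e) := by
  rw [slash]
  rw [Finset.sum_eq_single e]
  · simp
  · intro i _ hne
    simp [coeff_monomial, Ne.symm hne]
  · intro h
    exact absurd (Finset.mem_range.mpr (by omega)) h

lemma slash_add (w : ℕ) (a b c d : ℚ) (f g : Polynomial ℚ) :
    slash w a b c d (f + g) = slash w a b c d f + slash w a b c d g := by
  simp [slash, add_mul, Finset.sum_add_distrib]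

lemma slash_zero (w : ℕ) (a b c d : ℚ) : slash w a b c d 0 = 0 := by
  simp [slash]

lemma periodRel_add (w : ℕ) (f g : Polynomial ℚ) :
    periodRel w (f + g) = periodRel w f + periodRel w g := by
  simp only [periodRel, slash_add]; ring

lemma periodRel_zero (w : ℕ) : periodRel w 0 = 0 := by
  simp [periodRel, slash_zero]

lemma periodRel_sum {ι : Type*} (s : Finset ι) (w : ℕ) (f : ι → Polynomial ℚ) :
    periodRel w (∑ i ∈ s, f i) = ∑ i ∈ s, periodRel w (f i) := by
  classical
  induction s using Finset.cons_induction with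
  | empty => simp [periodRel_zero]
  | cons i s hi ih => rw [Finset.sum_cons, periodRel_add, ih, Finset.sum_cons]

lemma sum_comp' {ι : Type*} (s : Finset ι) (f : ι → Polynomial ℚ) (g : Polynomial ℚ) :
    (∑ i ∈ s, f i).comp g = ∑ i ∈ s, (f i).comp g := by
  classical
  induction s using Finset.cons_induction with
  | empty => simp
  | cons i s hi ih => rw [Finset.sum_cons, add_comp, ih, Finset.sum_cons]

lemma periodRel_monomial (w : ℕ) (e : ℕ) (he : e ≤ w) (hee : Even e) (g : ℚ) :
    periodRel w (monomial e g) =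
      C g * ((X ^ e - (X + 1) ^ e) * (1 - (2 * X + 1) ^ (w - e))) := by
  rw [periodRel, slash_monomial w _ _ _ _ e he, slash_monomial w _ _ _ _ e he,
    slash_monomial w _ _ _ _ e he]
  have h1 : (C (-1 : ℚ) * X + C (-1)) ^ e = (X + 1) ^ e := by
    have : (C (-1 : ℚ) * X + C (-1)) = -(X + 1) := by
      simp only [map_neg, map_one]; ring
    rw [this, hee.neg_pow]
  have h2 : (monomial e g : ℚ[X]) = C g * X ^ e := by
    rw [C_mul_X_pow_eq_monomial]
  rw [h1, h2]
  simp only [map_ofNat, C_0, C_1]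
  ring

noncomputable def sig : ℚ[X] := C (2⁻¹ : ℚ) * (X - 1)
noncomputable def tau : ℚ[X] := C (2 : ℚ) * X + 1

lemma two_C : (2 : ℚ[X]) * C (2⁻¹ : ℚ) = 1 := by
  rw [← map_ofNat (C : ℚ →+* ℚ[X]) 2, ← C_mul]; norm_num

lemma C_two : (C (2⁻¹ : ℚ) : ℚ[X]) * C 2 = 1 := by rw [← C_mul]; norm_num

lemma comp_sig_tau (f : ℚ[X]) : (f.comp sig).comp tau = f := by
  rw [Polynomial.comp_assoc]
  have : sig.comp tau = X := by
    rw [sig, tau]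
    simp only [mul_comp, sub_comp, C_comp, X_comp, one_comp]
    linear_combination X * C_two
  rw [this, comp_X]

noncomputable def A (e : ℕ) : ℚ[X] := (X - 1) ^ e - (X + 1) ^ e
noncomputable def v (w e : ℕ) : ℚ[X] := ((X - 1) ^ e - (X + 1) ^ e) * (1 - X ^ (w - e))

lemma main_comp (w e : ℕ) (g : ℚ) :
    ((C g * ((X ^ e - (X + 1) ^ e) * (1 - (2 * X + 1) ^ (w - e)))).comp sig)
      = C (g * (2⁻¹ : ℚ) ^ e) * v w e := by
  have hs1 : sig + 1 = C (2⁻¹ : ℚ) * (X + 1) := by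
    rw [sig]; linear_combination -two_C
  have hs2 : 2 * sig + 1 = X := by
    rw [sig]; linear_combination (X - 1) * two_C
  simp only [mul_comp, sub_comp, add_comp, pow_comp, X_comp, one_comp, C_comp,
    ofNat_comp, Nat.cast_ofNat]
  rw [hs2, hs1, sig, mul_pow, mul_pow, ← C_pow, C_mul, v]
  ring

lemma A_coeff (e i : ℕ) : (A e).coeff i = ((-1 : ℚ) ^ (e - i) - 1) * (e.choose i : ℚ) := by
  rw [A, coeff_sub, show (X - 1 : ℚ[X]) = X + C (-1) from by simp [sub_eq_add_neg],
    coeff_X_add_C_pow, show (X + 1 : ℚ[X]) = X + C 1 from by simp, coeff_X_add_C_pow]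
  ring

lemma A_coeff_even (e i : ℕ) (he : Even e) (hi : Even i) : (A e).coeff i = 0 := by
  rw [A_coeff]
  rcases le_or_gt e i with h | h
  · rw [Nat.sub_eq_zero_of_le h]; norm_num
  · have hev : Even (e - i) := by
      rcases he with ⟨a, ha⟩; rcases hi with ⟨b, hb⟩
      exact ⟨a - b, by omega⟩
    rw [hev.neg_one_pow]; ring

lemma A_coeff_odd (e i : ℕ) (he : Even e) (hi : Odd i) (hie : i ≤ e) :
    (A e).coeff i = -2 * (e.choose i : ℚ) := by
  rw [A_coeff]
  have hodd : Odd (e - i) := by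
    rcases he with ⟨a, ha⟩; rcases hi with ⟨b, hb⟩
    exact ⟨a - b - 1, by omega⟩
  rw [hodd.neg_one_pow]; ring

lemma A_coeff_ge (e i : ℕ) (hie : e ≤ i) : (A e).coeff i = 0 := by
  rw [A_coeff, Nat.sub_eq_zero_of_le hie]; norm_num

lemma A_coeff_symm (e i : ℕ) (he : Even e) (hie : i ≤ e) :
    (A e).coeff (e - i) = (A e).coeff i := by
  rw [A_coeff, A_coeff, Nat.choose_symm hie, Nat.sub_sub_self hie]
  have : ((-1 : ℚ) ^ (e - i)) = (-1 : ℚ) ^ i := by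
    have h1 : ((-1 : ℚ) ^ (e - i)) * (-1) ^ i = 1 := by
      rw [← pow_add, Nat.sub_add_cancel hie, he.neg_one_pow]
    have h2 : ((-1 : ℚ) ^ i) * (-1) ^ i = 1 := by
      have hii : Even (i + i) := ⟨i, rfl⟩
      rw [← pow_add, hii.neg_one_pow]
    have hne : ((-1 : ℚ) ^ i) ≠ 0 := by positivity
    exact mul_right_cancel₀ hne (h1.trans h2.symm)
  rw [this]

lemma v_coeff (w e j : ℕ) : (v w e).coeff j =
    (A e).coeff j - (if w - e ≤ j then (A e).coeff (j - (w - e)) else 0) := by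
  rw [v, mul_sub, mul_one, coeff_sub, ← A, coeff_mul_X_pow']

lemma v_coeff_even {w e j : ℕ} (hwe : Even w) (hee : Even e) (hj : Even j) :
    (v w e).coeff j = 0 := by
  rw [v_coeff, A_coeff_even e j hee hj]
  split_ifs with h
  · have : Even (j - (w - e)) := by
      rcases hwe with ⟨a, ha⟩; rcases hee with ⟨b, hb⟩; rcases hj with ⟨c, hc⟩
      exact ⟨c - (a - b), by omega⟩
    rw [A_coeff_even e _ hee this]; ring
  · ring

lemma v_coeff_gt {w e j : ℕ} (hew : e ≤ w) (hj : w < j) : (v w e).coeff j = 0 := by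
  rw [v_coeff, A_coeff_ge e j (by omega)]
  split_ifs with h
  · rw [A_coeff_ge e _ (by omega)]; ring
  · ring

lemma v_coeff_symm {w e j : ℕ} (hee : Even e) (hew : e ≤ w) (hj : j ≤ w) :
    (v w e).coeff (w - j) = -(v w e).coeff j := by
  rw [v_coeff, v_coeff]
  have hwe' : w - e ≤ w - j ↔ j ≤ e := by omega
  rcases le_or_gt j e with hje | hje
  · rw [if_pos (hwe'.mpr hje)]
    have h1 : w - j - (w - e) = e - j := by omega
    rw [h1, A_coeff_symm e j hee hje]
    split_ifs with h2
    · have h3 : (A e).coeff (w - j) = (A e).coeff (j - (w - e)) := by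
        have h4 : w - j ≤ e := by omega
        rw [← A_coeff_symm e (w - j) hee h4]
        congr 1; omega
      rw [h3]; ring
    · rw [A_coeff_ge e (w - j) (by omega)]; ring
  · rw [if_neg (by omega), A_coeff_ge e j (by omega)]
    split_ifs with h2
    · have h3 : (A e).coeff (w - j) = (A e).coeff (j - (w - e)) := by
        have h4 : w - j ≤ e := by omega
        rw [← A_coeff_symm e (w - j) hee h4]
        congr 1; omega
      rw [h3]; ring
    · rw [A_coeff_ge e (w - j) (by omega)]; ring

lemma v_coeff_low {w e j : ℕ} (hlt : j < w - e) : (v w e).coeff j = (A e).coeff j := by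
  rw [v_coeff, if_neg (by omega)]; ring


noncomputable def Mmat (w n r : ℕ) : Matrix (Fin r) (Fin n) ℚ :=
  fun s t => (2⁻¹ : ℚ) ^ (2 * ((t : ℕ) + 1)) * (v w (2 * ((t : ℕ) + 1))).coeff (2 * (s : ℕ) + 1)

noncomputable def alpha0 (n : ℕ) : (Fin n → ℚ) →ₗ[ℚ] ℚ[X] :=
  ∑ t : Fin n, (monomial (2 * ((t : ℕ) + 1)) : ℚ →ₗ[ℚ] ℚ[X]) ∘ₗ LinearMap.proj t

lemma alpha0_apply (n : ℕ) (b : Fin n → ℚ) :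
    alpha0 n b = ∑ t : Fin n, monomial (2 * ((t : ℕ) + 1)) (b t) := by
  simp [alpha0]

lemma coeff_alpha0_at (n : ℕ) (b : Fin n → ℚ) (t : Fin n) :
    (alpha0 n b).coeff (2 * ((t : ℕ) + 1)) = b t := by
  rw [alpha0_apply, finset_sum_coeff]
  rw [Finset.sum_eq_single t]
  · simp [coeff_monomial]
  · intro u _ hu
    rw [coeff_monomial, if_neg]
    intro h
    exact hu (Fin.ext (by omega))
  · intro h; exact absurd (Finset.mem_univ t) h

lemma lam_eq {w n : ℕ} (hw : w = 2 * n + 2) (b : Fin n → ℚ) :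
    (periodRel w (alpha0 n b)).comp sig
      = ∑ t : Fin n, C (b t * (2⁻¹ : ℚ) ^ (2 * ((t : ℕ) + 1))) * v w (2 * ((t : ℕ) + 1)) := by
  rw [alpha0_apply, periodRel_sum, sum_comp']
  apply Finset.sum_congr rfl
  intro t _
  rw [periodRel_monomial w _ (by omega) ⟨(t : ℕ) + 1, by ring⟩, main_comp]

lemma lam_coeff {w n : ℕ} (hw : w = 2 * n + 2) (b : Fin n → ℚ) (j : ℕ) :
    ((periodRel w (alpha0 n b)).comp sig).coeff j
      = ∑ t : Fin n, b t * (2⁻¹ : ℚ) ^ (2 * ((t : ℕ) + 1)) * (v w (2 * ((t : ℕ) + 1))).coeff j := by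
  rw [lam_eq hw, finset_sum_coeff]
  apply Finset.sum_congr rfl
  intro t _
  rw [coeff_C_mul]

lemma lam_coeff_odd {w n r : ℕ} (hw : w = 2 * n + 2) (b : Fin n → ℚ) (s : Fin r) :
    ((periodRel w (alpha0 n b)).comp sig).coeff (2 * (s : ℕ) + 1)
      = ((Mmat w n r).mulVec b) s := by
  rw [lam_coeff hw]
  simp only [Matrix.mulVec, dotProduct, Mmat]
  apply Finset.sum_congr rfl
  intro t _
  ring

lemma key_iff {w n r : ℕ} (hw : w = 2 * n + 2) (hr : 2 * r = n ∨ 2 * r = n + 1)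
    (b : Fin n → ℚ) :
    periodRel w (alpha0 n b) = 0 ↔ (Mmat w n r).mulVec b = 0 := by
  constructor
  · intro h
    funext s
    rw [← lam_coeff_odd hw b s, h]
    simp
  · intro h
    have hL : (periodRel w (alpha0 n b)).comp sig = 0 := by
      ext j
      rw [coeff_zero, lam_coeff hw]
      have hsym : ∀ j' ≤ w,
          ((periodRel w (alpha0 n b)).comp sig).coeff (w - j')
            = -((periodRel w (alpha0 n b)).comp sig).coeff j' := by
        intro j' hj'
        rw [lam_coeff hw, lam_coeff hw, ← Finset.sum_neg_distrib]
        apply Finset.sum_congr rfl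
        intro t _
        rw [v_coeff_symm ⟨(t:ℕ)+1, by ring⟩ (by omega) hj']
        ring
      rcases Nat.even_or_odd j with hje | hjo
      · apply Finset.sum_eq_zero
        intro t _
        rw [v_coeff_even ⟨n+1, by omega⟩ ⟨(t:ℕ)+1, by ring⟩ hje]
        ring
      · rcases le_or_gt j w with hjw | hjw
        · -- odd j ≤ w
          rw [← lam_coeff hw]
          obtain ⟨c, hc⟩ := hjo
          by_cases hcr : c < r
          case pos =>
            have := lam_coeff_odd (r := r) hw b ⟨c, hcr⟩
            simp only at this
            rw [show j = 2 * c + 1 by omega, this, h]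
            simp
          case neg =>
            by_cases hmid : 2 * j = w
            case pos =>
              have h1 := hsym j hjw
              rw [show w - j = j by omega] at h1
              linarith [h1]
            case neg =>
              have hc' : n - c < r ∧ w - j = 2 * (n - c) + 1 := by omega
              have h1 := hsym j hjw
              have := lam_coeff_odd (r := r) hw b ⟨n - c, hc'.1⟩
              simp only at this
              rw [hc'.2] at h1
              rw [this, h] at h1
              simp only [Pi.zero_apply] at h1
              linarith [h1]
        · apply Finset.sum_eq_zero
          intro t _
          rw [v_coeff_gt (by omega) hjw]
          ring
    have := comp_sig_tau (periodRel w (alpha0 n b))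
    rw [hL, zero_comp] at this
    exact this.symm

lemma Mmat_low {w n r : ℕ} (hw : w = 2 * n + 2) (hr : 2 * r = n ∨ 2 * r = n + 1)
    (s : Fin r) (t : Fin n) (ht : (t : ℕ) < r) :
    Mmat w n r s t = (2⁻¹ : ℚ) ^ (2 * ((t : ℕ) + 1)) *
      (-2 * ((2 * ((t : ℕ) + 1)).choose (2 * (s : ℕ) + 1) : ℚ)) := by
  have hs := s.2
  rw [Mmat, v_coeff_low (by omega)]
  rcases le_or_gt (2 * (s : ℕ) + 1) (2 * ((t : ℕ) + 1)) with h | h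
  · rw [A_coeff_odd _ _ ⟨(t : ℕ) + 1, by ring⟩ ⟨(s : ℕ), by ring⟩ h]
  · rw [A_coeff, Nat.choose_eq_zero_of_lt h]
    norm_num

lemma mul_surj {w n r : ℕ} (hw : w = 2 * n + 2) (hr : 2 * r = n ∨ 2 * r = n + 1)
    (hrn : r ≤ n) : Function.Surjective ((Mmat w n r).mulVecLin) := by
  classical
  set E : Matrix (Fin n) (Fin r) ℚ :=
    fun t s => if (t : ℕ) = (s : ℕ) then 1 else 0 with hE
  have hME : ∀ (s : Fin r) (s' : Fin r),
      (Mmat w n r * E) s s' = Mmat w n r s (Fin.castLE hrn s') := by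
    intro s s'
    rw [Matrix.mul_apply]
    rw [Finset.sum_eq_single (Fin.castLE hrn s')]
    · simp [hE]
    · intro t _ ht
      have : (t : ℕ) ≠ (s' : ℕ) := by
        intro hteq
        exact ht (Fin.ext (by simpa using hteq))
      simp [hE, this]
    · intro habs; exact absurd (Finset.mem_univ _) habs
  have hinj : Function.Injective ((Mmat w n r * E).mulVecLin) := by
    have hker : ∀ c : Fin r → ℚ, (Mmat w n r * E).mulVec c = 0 → c = 0 := by
      intro c hc
      by_contra hc0
      obtain ⟨t0, ht0⟩ := Function.ne_iff.mp hc0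
      set Smax := Finset.univ.filter (fun t : Fin r => c t ≠ 0) with hSmax
      have hne : Smax.Nonempty := ⟨t0, by
        simp only [hSmax, Finset.mem_filter, Finset.mem_univ, true_and]
        exact ht0⟩
      set T := Smax.max' hne with hT
      have hcT : c T ≠ 0 := by
        have := Smax.max'_mem hne
        simp [hSmax] at this
        exact this
      have hkey : ((Mmat w n r * E).mulVec c) T = 0 := by rw [hc]; rfl
      rw [Matrix.mulVec, dotProduct] at hkey
      rw [Finset.sum_eq_single_of_mem T (Finset.mem_univ T)] at hkey
      · -- diagonal entry nonzero
        rw [hME, Mmat_low hw hr _ _ (by simpa using T.2)] at hkey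
        have hch : (((2 * ((T : ℕ) + 1)).choose (2 * (T : ℕ) + 1)) : ℚ)
            = ((2 * ((T : ℕ) + 1)) : ℚ) := by
          norm_cast
          rw [show 2 * ((T:ℕ)+1) = (2*(T:ℕ)+2) by ring, show (2*(T:ℕ)+1) = (2*(T:ℕ)+2) - 1 by omega,
            Nat.choose_symm (by omega), Nat.choose_one_right]
        simp only [Fin.coe_castLE] at hkey
        rw [hch] at hkey
        have h2 : ((2⁻¹:ℚ)) ^ (2 * ((T:ℕ)+1)) ≠ 0 := by positivity
        have h3 : ((2 * ((T:ℕ)+1)) : ℚ) ≠ 0 := by positivity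
        rcases mul_eq_zero.mp hkey with h | h
        · rcases mul_eq_zero.mp h with h' | h'
          · exact h2 h'
          · rcases mul_eq_zero.mp h' with h'' | h''
            · norm_num at h''
            · exact h3 h''
        · exact hcT h
      · intro u _ hu
        rcases lt_or_gt_of_ne (fun h => hu (Fin.ext (by simpa using h)) : (u:ℕ) ≠ (T:ℕ)) with hlt | hgt
        ·
          rw [hME, Mmat_low hw hr _ _ (by simpa using u.2)]
          rw [show (((Fin.castLE hrn u) : ℕ)) = (u : ℕ) by simp]
          rw [Nat.choose_eq_zero_of_lt (by omega)]
          ring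
        · have hcu : c u = 0 := by
            by_contra hcu
            have hmem : u ∈ Smax := by simp [hSmax, hcu]
            have h5 := Smax.le_max' u hmem
            rw [← hT] at h5
            have h6 := Fin.le_def.mp h5
            omega
          rw [hcu]
          exact mul_zero _
    intro x y hxy
    have := hker (x - y) (by
      have : (Mmat w n r * E).mulVecLin (x - y) = 0 := by rw [map_sub, hxy, sub_self]
      simpa using this)
    exact sub_eq_zero.mp this
  have hsurj2 : Function.Surjective ((Mmat w n r * E).mulVecLin) :=
    LinearMap.injective_iff_surjective.mp hinj
  rw [Matrix.mulVecLin_mul] at hsurj2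
  exact Function.Surjective.of_comp hsurj2



lemma expand_poly {k n : ℕ} (hn : 2 * n = k - 4) (hk : 4 ≤ k) (P : ℚ[X])
    (hs : ∀ i : ℕ, P.coeff i ≠ 0 → 2 ≤ i ∧ i ≤ k - 4 ∧ Even i) :
    alpha0 n (fun t => P.coeff (2 * ((t : ℕ) + 1))) = P := by
  rw [alpha0_apply]
  ext j
  rw [finset_sum_coeff]
  by_cases hz : P.coeff j = 0
  · rw [hz]
    apply Finset.sum_eq_zero
    intro t _
    rw [coeff_monomial]
    split_ifs with h
    · rw [← h] at hz; exact hz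
    · rfl
  · obtain ⟨h2, h4, c, hc⟩ := hs j hz
    have htlt : c - 1 < n := by omega
    rw [Finset.sum_eq_single (⟨c - 1, htlt⟩ : Fin n)]
    · rw [coeff_monomial, if_pos (by simp; omega)]
      congr 1
      simp; omega
    · intro u _ hu
      rw [coeff_monomial, if_neg]
      intro habs
      apply hu
      apply Fin.ext
      simp
      omega
    · intro habs; exact absurd (Finset.mem_univ _) habs

end DimAux



open DimAux

/-- dim W_k^{+,0} = ⌊k/4⌋ − 1, where W_k^{+,0} consists of even polynomials
Σ_{i=2, i even}^{k−4} a_i X^i satisfying P|(1−T)(1+M) = 0. -/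
theorem dim_even_period_polys (k : ℕ) (hk : 4 ≤ k) (hke : Even k)
    (W : Submodule ℚ (Polynomial ℚ))
    (hW : ∀ P : Polynomial ℚ, P ∈ W ↔
      ((∀ i : ℕ, P.coeff i ≠ 0 → 2 ≤ i ∧ i ≤ k - 4 ∧ Even i) ∧
        periodRel (k - 2) P = 0)) :
    Module.finrank ℚ W = k / 4 - 1 := by
  classical
  obtain ⟨K, hK⟩ := hke
  set n := (k - 4) / 2 with hndef
  set r := (n + 1) / 2 with hrdef
  set w := k - 2 with hwdef
  have hn : 2 * n = k - 4 := by omega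
  have hw : w = 2 * n + 2 := by omega
  have hr : 2 * r = n ∨ 2 * r = n + 1 := by omega
  have hrn : r ≤ n := by omega
  set Φ : (Fin n → ℚ) →ₗ[ℚ] (Fin r → ℚ) := (Mmat w n r).mulVecLin with hPhi
  -- membership of alpha0 images
  have hmem : ∀ b ∈ LinearMap.ker Φ, alpha0 n b ∈ W := by
    intro b hb
    rw [hW]
    constructor
    · intro i hi
      rw [alpha0_apply, finset_sum_coeff] at hi
      obtain ⟨t, _, ht⟩ := Finset.exists_ne_zero_of_sum_ne_zero hi
      rw [coeff_monomial] at ht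
      by_cases h : 2 * ((t : ℕ) + 1) = i
      · have := t.2
        exact ⟨by omega, by omega, ⟨(t : ℕ) + 1, by omega⟩⟩
      · rw [if_neg h] at ht; exact absurd rfl ht
    · exact (key_iff hw hr b).mpr (by rwa [LinearMap.mem_ker, hPhi, Matrix.mulVecLin_apply] at hb)
  have hmem2 : ∀ P ∈ W, (fun t : Fin n => P.coeff (2 * ((t : ℕ) + 1))) ∈ LinearMap.ker Φ := by
    intro P hP
    rw [hW] at hP
    obtain ⟨hsupp, hper⟩ := hP
    rw [LinearMap.mem_ker, hPhi, Matrix.mulVecLin_apply]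
    funext s
    rw [← lam_coeff_odd hw _ s, expand_poly hn hk P hsupp]
    rw [show w = k - 2 from rfl, hper, zero_comp, coeff_zero]
    rfl
  -- linear maps
  set β0 : ℚ[X] →ₗ[ℚ] (Fin n → ℚ) := LinearMap.pi (fun t : Fin n => lcoeff ℚ (2 * ((t : ℕ) + 1)))
    with hβ0
  have hβ0app : ∀ (P : ℚ[X]) (t : Fin n), β0 P t = P.coeff (2 * ((t : ℕ) + 1)) := by
    intro P t; rfl
  set α : (LinearMap.ker Φ) →ₗ[ℚ] W :=
    LinearMap.codRestrict W ((alpha0 n) ∘ₗ (LinearMap.ker Φ).subtype)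
      (fun c => hmem c.1 c.2) with hα
  set β : W →ₗ[ℚ] (LinearMap.ker Φ) :=
    LinearMap.codRestrict (LinearMap.ker Φ) (β0 ∘ₗ W.subtype)
      (fun P => by
        have := hmem2 P.1 P.2
        convert this using 2
        rfl) with hβ
  have h1 : ∀ P : W, α (β P) = P := by
    intro P
    apply Subtype.ext
    have hsupp := ((hW P.1).mp P.2).1
    simp only [hα, hβ, LinearMap.codRestrict_apply, LinearMap.comp_apply,
      Submodule.subtype_apply]
    exact expand_poly hn hk P.1 hsupp
  have h2 : ∀ c : LinearMap.ker Φ, β (α c) = c := by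
    intro c
    apply Subtype.ext
    funext t
    simp only [hα, hβ, LinearMap.codRestrict_apply, LinearMap.comp_apply,
      Submodule.subtype_apply]
    rw [hβ0app]
    exact coeff_alpha0_at n c.1 t
  have heq : Module.finrank ℚ (LinearMap.ker Φ) = Module.finrank ℚ W := by
    exact LinearEquiv.finrank_eq
      (LinearEquiv.ofLinear α β (LinearMap.ext h1) (LinearMap.ext h2))
  have hrank : Module.finrank ℚ (LinearMap.range Φ) = r := by
    rw [LinearMap.range_eq_top.mpr (mul_surj hw hr hrn), finrank_top]
    simp [Module.finrank_pi]
  have hnull := LinearMap.finrank_range_add_finrank_ker Φ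
  rw [hrank] at hnull
  have hfin : Module.finrank ℚ (Fin n → ℚ) = n := by simp [Module.finrank_pi]
  rw [hfin] at hnull
  rw [← heq]
  omega
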